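/- For d ≥ 2, a vector-valued function f : ℝ^d → ℝ^d is isotropic (f(Q r) = Q f(r) for all orthogonal Q) if and only if there exists a scalar function β : ℝ≥0 → ℝ with f(r) = β(|r|²) r for all r; in particular f(0) = 0 and f(−r) = −f(r). -/

import Mathlib

open Matrix

private lemma vmv_mulVec {d : ℕ} (v w x : Fin d → ℝ) :
    (vecMulVec v w).mulVec x = (w ⬝ᵥ x) • v := by
  ext i
  simp [vecMulVec_apply, mulVec, dotProduct, Finset.mul_sum, mul_assoc, mul_comm, mul_left_comm]

private lemma vmv_mul_vmv {d : ℕ} (v w x y : Fin d → ℝ) :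
    vecMulVec v w * vecMulVec x y = (w ⬝ᵥ x) • vecMulVec v y := by
  ext i j
  simp [vecMulVec_apply, Matrix.mul_apply, dotProduct, Finset.sum_mul, Finset.mul_sum]
  apply Finset.sum_congr rfl
  intros; ring

private lemma vmv_symm {d : ℕ} (u : Fin d → ℝ) : (vecMulVec u u)ᵀ = vecMulVec u u := by
  ext i j
  simp [vecMulVec_apply, Matrix.transpose_apply, mul_comm]

private lemma dot_eq_sum_sq {d : ℕ} (r : Fin d → ℝ) : r ⬝ᵥ r = ∑ i, r i ^ 2 := by
  simp [dotProduct, sq]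

private lemma dot_self_pos {d : ℕ} {r : Fin d → ℝ} (hr : r ≠ 0) : 0 < r ⬝ᵥ r := by
  have h0 : 0 ≤ r ⬝ᵥ r := Finset.sum_nonneg fun i _ => mul_self_nonneg _
  rcases h0.lt_or_eq with h | h
  · exact h
  · exact absurd (dotProduct_self_eq_zero.mp h.symm) hr

private lemma orth_pres {d : ℕ} (Q : Matrix (Fin d) (Fin d) ℝ) (hQ : Q * Qᵀ = 1)
    (r : Fin d → ℝ) : (Q.mulVec r) ⬝ᵥ (Q.mulVec r) = r ⬝ᵥ r := by
  have h' : Qᵀ * Q = 1 := mul_eq_one_comm.mp hQ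
  rw [Matrix.dotProduct_mulVec, Matrix.vecMul_mulVec, h', Matrix.vecMul_one]

/-- The matrix `c • uuᵀ` squares to twice itself when `c = 2/(u⬝u)`. -/
private lemma sq_key {d : ℕ} (u : Fin d → ℝ) (hu : u ⬝ᵥ u ≠ 0) :
    ((2 / (u ⬝ᵥ u)) • vecMulVec u u) * ((2 / (u ⬝ᵥ u)) • vecMulVec u u)
      = (2 : ℝ) • ((2 / (u ⬝ᵥ u)) • vecMulVec u u) := by
  rw [Matrix.smul_mul, Matrix.mul_smul, vmv_mul_vmv, smul_smul, smul_smul, smul_smul]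
  congr 1
  field_simp

/-- An orthogonal matrix mapping `s` to `r` when they have the same norm. -/
private lemma exists_orth {d : ℕ} (r s : Fin d → ℝ) (h : r ⬝ᵥ r = s ⬝ᵥ s) :
    ∃ Q : Matrix (Fin d) (Fin d) ℝ, Q * Qᵀ = 1 ∧ Q.mulVec s = r := by
  by_cases hrs : r = s
  · exact ⟨1, by simp, by simp [hrs]⟩
  · set u : Fin d → ℝ := s - r with hu
    have hune : u ≠ 0 := sub_ne_zero.mpr (Ne.symm hrs)
    have huu : 0 < u ⬝ᵥ u := dot_self_pos hune
    set c : ℝ := 2 / (u ⬝ᵥ u) with hc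
    set B : Matrix (Fin d) (Fin d) ℝ := c • vecMulVec u u with hB
    have hBsymm : Bᵀ = B := by rw [hB, Matrix.transpose_smul, vmv_symm]
    have hBB : B * B = (2 : ℝ) • B := sq_key u huu.ne'
    refine ⟨1 - B, ?_, ?_⟩
    · rw [Matrix.transpose_sub, Matrix.transpose_one, hBsymm]
      have hexp : (1 - B) * (1 - B) = 1 - B - B + B * B := by noncomm_ring
      rw [hexp, hBB]
      module
    · have hus : u ⬝ᵥ s = (u ⬝ᵥ u) / 2 := by
        have e1 : u ⬝ᵥ u = s ⬝ᵥ s - s ⬝ᵥ r - (r ⬝ᵥ s - r ⬝ᵥ r) := by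
          rw [hu, sub_dotProduct, dotProduct_sub, dotProduct_sub]
        have e2 : u ⬝ᵥ s = s ⬝ᵥ s - r ⬝ᵥ s := by rw [hu, sub_dotProduct]
        have e3 : s ⬝ᵥ r = r ⬝ᵥ s := dotProduct_comm _ _
        rw [e2, e1, e3, h]
        ring
      rw [Matrix.sub_mulVec, Matrix.one_mulVec, hB, Matrix.smul_mulVec, vmv_mulVec,
        smul_smul, hus]
      have : c * ((u ⬝ᵥ u) / 2) = 1 := by rw [hc]; field_simp
      rw [this, one_smul, hu]
      abel

/-- For nonzero `r`, an isotropic `f` satisfies `f r = ((r ⬝ᵥ f r)/(r ⬝ᵥ r)) • r`. -/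
private lemma fix_scalar {d : ℕ} {f : (Fin d → ℝ) → (Fin d → ℝ)}
    (H : ∀ Q : Matrix (Fin d) (Fin d) ℝ, Q * Qᵀ = 1 → ∀ r, f (Q.mulVec r) = Q.mulVec (f r))
    {r : Fin d → ℝ} (hr : r ≠ 0) :
    f r = ((r ⬝ᵥ f r) / (r ⬝ᵥ r)) • r := by
  have ht : 0 < r ⬝ᵥ r := dot_self_pos hr
  set c : ℝ := 2 / (r ⬝ᵥ r) with hc
  set B : Matrix (Fin d) (Fin d) ℝ := c • vecMulVec r r with hB
  have hBsymm : Bᵀ = B := by rw [hB, Matrix.transpose_smul, vmv_symm]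
  have hBB : B * B = (2 : ℝ) • B := sq_key r ht.ne'
  have hQ : (B - 1) * (B - 1)ᵀ = 1 := by
    rw [Matrix.transpose_sub, Matrix.transpose_one, hBsymm]
    have hexp : (B - 1) * (B - 1) = B * B - B - B + 1 := by noncomm_ring
    rw [hexp, hBB]
    module
  have hBr : B.mulVec r = (2 : ℝ) • r := by
    rw [hB, Matrix.smul_mulVec, vmv_mulVec, smul_smul]
    have : c * (r ⬝ᵥ r) = 2 := by rw [hc]; field_simp
    rw [this]
  have hQr : (B - 1).mulVec r = r := by
    rw [Matrix.sub_mulVec, Matrix.one_mulVec, hBr]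
    module
  have key := H (B - 1) hQ r
  rw [hQr, Matrix.sub_mulVec, Matrix.one_mulVec, hB, Matrix.smul_mulVec, vmv_mulVec,
    smul_smul] at key
  -- key : f r = (c * (r ⬝ᵥ f r)) • r - f r
  funext i
  have hk := congrFun key i
  simp only [Pi.sub_apply, Pi.smul_apply, smul_eq_mul] at hk
  simp only [Pi.smul_apply, smul_eq_mul]
  rw [hc] at hk
  have hne : r ⬝ᵥ r ≠ 0 := ht.ne'
  field_simp at hk ⊢
  linarith

theorem stmt7 {d : ℕ} (hd : 2 ≤ d) (f : (Fin d → ℝ) → (Fin d → ℝ)) :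
    ((∀ Q : Matrix (Fin d) (Fin d) ℝ, Q * Qᵀ = 1 →
        ∀ r, f (Q.mulVec r) = Q.mulVec (f r)) ↔
      ∃ β : ℝ → ℝ, ∀ r, f r = β (∑ i, r i ^ 2) • r) ∧
    ((∀ Q : Matrix (Fin d) (Fin d) ℝ, Q * Qᵀ = 1 →
        ∀ r, f (Q.mulVec r) = Q.mulVec (f r)) →
      f 0 = 0 ∧ ∀ r, f (-r) = -f r) := by
  have hd0 : 0 < d := by omega
  have hneg : ∀ _ : (∀ Q : Matrix (Fin d) (Fin d) ℝ, Q * Qᵀ = 1 →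
      ∀ r, f (Q.mulVec r) = Q.mulVec (f r)), f 0 = 0 ∧ ∀ r, f (-r) = -f r := by
    intro H
    have hQ : (-1 : Matrix (Fin d) (Fin d) ℝ) * (-1 : Matrix (Fin d) (Fin d) ℝ)ᵀ = 1 := by
      simp
    have hmv : ∀ r : Fin d → ℝ, (-1 : Matrix (Fin d) (Fin d) ℝ).mulVec r = -r := by
      intro r
      rw [Matrix.neg_mulVec, Matrix.one_mulVec]
    have hodd : ∀ r, f (-r) = -f r := by
      intro r
      have := H (-1) hQ r
      rwa [hmv, hmv] at this
    have h0 : f 0 = 0 := by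
      have h := hodd 0
      rw [neg_zero] at h
      funext i
      have := congrFun h i
      simp only [Pi.neg_apply, Pi.zero_apply] at this ⊢
      linarith
    exact ⟨h0, hodd⟩
  constructor
  · constructor
    · intro H
      set i0 : Fin d := ⟨0, hd0⟩ with hi0
      set v : ℝ → (Fin d → ℝ) := fun t i => if i = i0 then Real.sqrt t else 0 with hv
      refine ⟨fun t => (v t ⬝ᵥ f (v t)) / (v t ⬝ᵥ v t), ?_⟩
      intro r
      by_cases hr : r = 0
      · rw [hr, smul_zero, (hneg H).1]
      · set t : ℝ := ∑ i, r i ^ 2 with htdef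
        have htr : r ⬝ᵥ r = t := dot_eq_sum_sq r
        have ht : 0 < t := htr ▸ dot_self_pos hr
        have hvt : v t ⬝ᵥ v t = t := by
          simp only [hv, dotProduct]
          rw [Finset.sum_eq_single i0]
          · simp [Real.mul_self_sqrt ht.le]
          · intro b _ hb; simp [hb]
          · intro hmem; simp at hmem
        have hvne : v t ≠ 0 := by
          intro hz
          rw [hz] at hvt
          simp at hvt
          exact ht.ne hvt
        obtain ⟨Q, hQ, hQs⟩ := exists_orth r (v t) (by rw [htr, hvt])
        calc f r = f (Q.mulVec (v t)) := by rw [hQs]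
          _ = Q.mulVec (f (v t)) := H Q hQ (v t)
          _ = Q.mulVec (((v t ⬝ᵥ f (v t)) / (v t ⬝ᵥ v t)) • v t) := by
              rw [← fix_scalar H hvne]
          _ = ((v t ⬝ᵥ f (v t)) / (v t ⬝ᵥ v t)) • Q.mulVec (v t) := by
              rw [Matrix.mulVec_smul]
          _ = ((v t ⬝ᵥ f (v t)) / (v t ⬝ᵥ v t)) • r := by rw [hQs]
    · rintro ⟨β, hβ⟩ Q hQ r
      rw [hβ (Q.mulVec r), hβ r, Matrix.mulVec_smul]
      have := orth_pres Q hQ r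
      rw [dot_eq_sum_sq, dot_eq_sum_sq] at this
      rw [this]
  · exact hneg
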